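/- Suppose r > d > 0 and let (h*, k*) with K < h* < k* solve the smooth-fit system (opt-hk). Define V piecewise by: V(x) := x − K for x ≥ k*; V(x) := (k* − K)·ψ̂_{h*}(x)/ψ̂_{h*}(k*) + ((h* − K) + δ)·φ̂_{k*}(x)/φ̂_{k*}(h*) for h* < x < k*; V(x) := (x − K) + δ for K ≤ x ≤ h*; V(x) := δ(x/K)^η for 0 < x < K. Then V is continuous on (0, ∞) and is differentiable at both h* and k*, with V′(h*) = 1 and V′(k*) = 1 (smooth fit). -/

import Mathlib

noncomputable section

private theorem keyalg (a b c e h k K H η ν : ℝ) (ha : 0 < a) (hb : 0 < b) (hc : 0 < c) (he : 0 < e)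
    (hh : 0 < h) (hk : 0 < k) (hW : 0 < b * c - a * e)
    (hsys1 : (b - e / c * a) / (a * b / h) - (ν * (b / h) - e / c * (η * (a / h))) / (a * b / h) * H
      = (η - ν) * (k - K) / c) :
    (k - K) * (η * (a / h) - a / b * (ν * (b / h))) / (c - a / b * e)
      + H * (ν * (b / h) - e / c * (η * (a / h))) / (b - e / c * a) = 1 := by
  have hWne : b * c - a * e ≠ 0 := hW.ne'
  have e1 : c - a / b * e = (b * c - a * e) / b := by field_simp
  have e2 : b - e / c * a = (b * c - a * e) / c := by field_simp
  field_simp at hsys1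
  have P : (b * c - e * a) * h - (ν * b * c - e * η * a) * H = (η - ν) * (k - K) * (a * b) := by
    apply mul_left_cancel₀ (show (c * c * h * h * a * b) ≠ 0 by positivity)
    linear_combination (c * c * h * h * a * b) * hsys1
  rw [e1, e2]
  field_simp

  linear_combination (-1 : ℝ) * P

private theorem keyalg2 (a b c e h k K H η ν : ℝ) (ha : 0 < a) (hb : 0 < b) (hc : 0 < c) (he : 0 < e)
    (hh : 0 < h) (hk : 0 < k) (hW : 0 < b * c - a * e)
    (hsys2 : (c - a / b * e) / (c * e / k) - (η * (c / k) - a / b * (ν * (e / k))) / (c * e / k) * (k - K)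
      = -(η - ν) * H / b) :
    (k - K) * (η * (c / k) - a / b * (ν * (e / k))) / (c - a / b * e)
      + H * (ν * (e / k) - e / c * (η * (c / k))) / (b - e / c * a) = 1 := by
  have hWne : b * c - a * e ≠ 0 := hW.ne'
  have e1 : c - a / b * e = (b * c - a * e) / b := by field_simp
  have e2 : b - e / c * a = (b * c - a * e) / c := by field_simp
  field_simp at hsys2
  have P : (b * c - a * e) * k - (η * b * c - a * ν * e) * (k - K) = -(η - ν) * H * (c * e) := by
    apply mul_left_cancel₀ (show (b * b * k * k * c * e) ≠ 0 by positivity)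
    linear_combination (b * b * k * k * c * e) * hsys2
  rw [e1, e2]
  field_simp
  rw [div_eq_iff (by rw [mul_comm c b]; exact hWne)]
  linear_combination (-1 : ℝ) * P


/-- The candidate value function `V` for `r > d > 0` built from a solution `(h*, k*)` of the
smooth-fit system is continuous on `(0, ∞)` and differentiable at `h*` and `k*` with
derivative `1` at both points (smooth fit). -/
theorem candidate_continuous_smooth_fit (r d σ K δ : ℝ)
    (hrd : r > d) (hd : 0 < d) (hσ : 0 < σ) (hK : 0 < K) (hδ : 0 < δ)
    (lam κ η ν B : ℝ)
    (hlam : lam = Real.sqrt (2 * r + ((r - d - σ ^ 2 / 2) / σ) ^ 2))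
    (hκ : κ = (r - d - σ ^ 2 / 2) / σ ^ 2)
    (hη : η = lam / σ - κ) (hν : ν = -(lam / σ) - κ) (hB : B = η - ν)
    (ψ φ Sd : ℝ → ℝ) (hatψ hatφ : ℝ → ℝ → ℝ)
    (hψ : ψ = fun x => x ^ η) (hφ : φ = fun x => x ^ ν)
    (hhatψ : hatψ = fun h x => ψ x - (ψ h / φ h) * φ x)
    (hhatφ : hatφ = fun k x => φ x - (φ k / ψ k) * ψ x)
    (hSd : Sd = fun x => x ^ (-(2 * (r - d) / σ ^ 2)))
    (h k : ℝ) (hKh : K < h) (hhk : h < k)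
    (hsys1 : hatφ k h / Sd h - (deriv (hatφ k) h / Sd h) * ((h - K) + δ) =
      B * (k - K) / ψ k)
    (hsys2 : hatψ h k / Sd k - (deriv (hatψ h) k / Sd k) * (k - K) =
      -B * ((h - K) + δ) / φ h)
    (V : ℝ → ℝ)
    (hV : V = fun x =>
      if k ≤ x then x - K
      else if h < x then
        (k - K) * hatψ h x / hatψ h k + ((h - K) + δ) * hatφ k x / hatφ k h
      else if K ≤ x then (x - K) + δ
      else δ * (x / K) ^ η) :
    ContinuousOn V (Set.Ioi 0) ∧ HasDerivAt V 1 h ∧ HasDerivAt V 1 k := by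
  have hh : 0 < h := hK.trans hKh
  have hk0 : 0 < k := hh.trans hhk
  have hr : 0 < r := hd.trans hrd
  have hlampos : 0 < lam := by
    rw [hlam]; exact Real.sqrt_pos.mpr (by positivity)
  have hην : η - ν = 2 * (lam / σ) := by rw [hη, hν]; ring
  have hBpos : 0 < B := by rw [hB, hην]; positivity
  have hsum : (-(2 * (r - d) / σ ^ 2)) = η + ν - 1 := by
    rw [hη, hν, hκ]; field_simp; ring
  -- atoms
  have Ph : (0:ℝ) < h ^ η := Real.rpow_pos_of_pos hh η
  have Qh : (0:ℝ) < h ^ ν := Real.rpow_pos_of_pos hh ν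
  have Pk : (0:ℝ) < k ^ η := Real.rpow_pos_of_pos hk0 η
  have Qk : (0:ℝ) < k ^ ν := Real.rpow_pos_of_pos hk0 ν
  -- Wronskian positivity
  have hW : h ^ η * k ^ ν < h ^ ν * k ^ η := by
    have h1 : h ^ (η - ν) < k ^ (η - ν) := by
      apply Real.rpow_lt_rpow hh.le hhk
      rw [← hB]; exact hBpos
    rw [Real.rpow_sub hh, Real.rpow_sub hk0] at h1
    rw [div_lt_div_iff₀ Qh Qk] at h1
    linarith
  -- pointwise descriptions
  have Fψ : hatψ h = fun x => x ^ η - (h ^ η / h ^ ν) * x ^ ν := by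
    funext x; simp [hhatψ, hψ, hφ]
  have Fφ : hatφ k = fun x => x ^ ν - (k ^ ν / k ^ η) * x ^ η := by
    funext x; simp [hhatφ, hψ, hφ]
  have Eψk : hatψ h k = k ^ η - (h ^ η / h ^ ν) * k ^ ν := by rw [Fψ]
  have Eφh : hatφ k h = h ^ ν - (k ^ ν / k ^ η) * h ^ η := by rw [Fφ]
  have Eψh : hatψ h h = 0 := by
    rw [Fψ]; simp only; rw [div_mul_cancel₀ _ Qh.ne']; ring
  have Eφk : hatφ k k = 0 := by
    rw [Fφ]; simp only; rw [div_mul_cancel₀ _ Pk.ne']; ring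
  have hψkpos : 0 < hatψ h k := by
    rw [Eψk]; rw [sub_pos, div_mul_eq_mul_div, div_lt_iff₀ Qh]; linarith
  have hφhpos : 0 < hatφ k h := by
    rw [Eφh]; rw [sub_pos, div_mul_eq_mul_div, div_lt_iff₀ Pk]; linarith
  -- rpow expansions
  have rη : ∀ x : ℝ, 0 < x → x ^ (η - 1) = x ^ η / x :=
    fun x hx => by rw [Real.rpow_sub hx, Real.rpow_one]
  have rν : ∀ x : ℝ, 0 < x → x ^ (ν - 1) = x ^ ν / x :=
    fun x hx => by rw [Real.rpow_sub hx, Real.rpow_one]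
  have ESd : ∀ x : ℝ, 0 < x → Sd x = x ^ η * x ^ ν / x := by
    intro x hx
    rw [hSd]; simp only
    rw [hsum, Real.rpow_sub hx, Real.rpow_add hx, Real.rpow_one]
  -- derivatives of hatψ h and hatφ k
  have dψ : ∀ x : ℝ, 0 < x →
      HasDerivAt (hatψ h) (η * (x ^ η / x) - (h ^ η / h ^ ν) * (ν * (x ^ ν / x))) x := by
    intro x hx
    rw [Fψ]
    have := (Real.hasDerivAt_rpow_const (p := η) (Or.inl hx.ne')).sub
      ((Real.hasDerivAt_rpow_const (p := ν) (Or.inl hx.ne')).const_mul (h ^ η / h ^ ν))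
    rwa [rη x hx, rν x hx] at this
  have dφ : ∀ x : ℝ, 0 < x →
      HasDerivAt (hatφ k) (ν * (x ^ ν / x) - (k ^ ν / k ^ η) * (η * (x ^ η / x))) x := by
    intro x hx
    rw [Fφ]
    have := (Real.hasDerivAt_rpow_const (p := ν) (Or.inl hx.ne')).sub
      ((Real.hasDerivAt_rpow_const (p := η) (Or.inl hx.ne')).const_mul (k ^ ν / k ^ η))
    rwa [rν x hx, rη x hx] at this
  -- rewrite the system
  rw [(dφ h hh).deriv, ESd h hh, Eφh, hψ] at hsys1
  rw [(dψ k hk0).deriv, ESd k hk0, Eψk, hφ] at hsys2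
  simp only at hsys1 hsys2
  subst hB
  -- key smooth-fit identities
  have key1 : (k - K) * (η * (h ^ η / h) - (h ^ η / h ^ ν) * (ν * (h ^ ν / h))) / hatψ h k
      + ((h - K) + δ) * (ν * (h ^ ν / h) - (k ^ ν / k ^ η) * (η * (h ^ η / h))) / hatφ k h = 1 := by
    rw [Eψk, Eφh]
    exact keyalg (h ^ η) (h ^ ν) (k ^ η) (k ^ ν) h k K ((h - K) + δ) η ν
      Ph Qh Pk Qk hh hk0 (sub_pos.mpr hW) hsys1
  have key2 : (k - K) * (η * (k ^ η / k) - (h ^ η / h ^ ν) * (ν * (k ^ ν / k))) / hatψ h k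
      + ((h - K) + δ) * (ν * (k ^ ν / k) - (k ^ ν / k ^ η) * (η * (k ^ η / k))) / hatφ k h = 1 := by
    rw [Eψk, Eφh]
    exact keyalg2 (h ^ η) (h ^ ν) (k ^ η) (k ^ ν) h k K ((h - K) + δ) η ν
      Ph Qh Pk Qk hh hk0 (sub_pos.mpr hW) hsys2
  -- the middle candidate function
  set g : ℝ → ℝ := fun x =>
    (k - K) * hatψ h x / hatψ h k + ((h - K) + δ) * hatφ k x / hatφ k h with hg
  have dg : ∀ x : ℝ, 0 < x → HasDerivAt g
      ((k - K) * (η * (x ^ η / x) - (h ^ η / h ^ ν) * (ν * (x ^ ν / x))) / hatψ h k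
      + ((h - K) + δ) * (ν * (x ^ ν / x) - (k ^ ν / k ^ η) * (η * (x ^ η / x))) / hatφ k h) x := by
    intro x hx
    exact ((((dψ x hx).const_mul (k - K)).div_const _).add
      (((dφ x hx).const_mul ((h - K) + δ)).div_const _))
  have dgh : HasDerivAt g 1 h := key1 ▸ dg h hh
  have dgk : HasDerivAt g 1 k := key2 ▸ dg k hk0
  have gh : g h = (h - K) + δ := by
    show (k - K) * hatψ h h / hatψ h k + ((h - K) + δ) * hatφ k h / hatφ k h = (h - K) + δ
    rw [Eψh, mul_zero, zero_div, zero_add, mul_div_assoc, div_self hφhpos.ne', mul_one]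
  have gk : g k = k - K := by
    show (k - K) * hatψ h k / hatψ h k + ((h - K) + δ) * hatφ k k / hatφ k h = k - K
    rw [Eφk, mul_zero, zero_div, add_zero, mul_div_assoc, div_self hψkpos.ne', mul_one]
  -- value identities for V
  have Vval : ∀ x, V x = if k ≤ x then x - K
      else if h < x then g x
      else if K ≤ x then (x - K) + δ
      else δ * (x / K) ^ η := by
    intro x; rw [hV]
  have Vh : V h = (h - K) + δ := by
    rw [Vval]; rw [if_neg (not_le.mpr hhk), if_neg (lt_irrefl h), if_pos hKh.le]
  have Vk : V k = k - K := by
    rw [Vval]; rw [if_pos le_rfl]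
  -- derivative at h
  have derivh : HasDerivAt V 1 h := by
    have left : HasDerivWithinAt V 1 (Set.Iic h) h := by
      have base : HasDerivAt (fun x : ℝ => (x - K) + δ) 1 h := by
        simpa using ((hasDerivAt_id h).sub_const K).add_const δ
      refine base.hasDerivWithinAt.congr_of_eventuallyEq ?_ (by simp [Vh])
      filter_upwards [self_mem_nhdsWithin, nhdsWithin_le_nhds (Ioi_mem_nhds hKh)]
        with x hx1 hx2
      have hx1' : x ≤ h := Set.mem_Iic.mp hx1
      have hx2' : K < x := Set.mem_Ioi.mp hx2
      rw [Vval, if_neg (not_le.mpr (lt_of_le_of_lt hx1' hhk)),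
        if_neg (not_lt.mpr hx1'), if_pos hx2'.le]
    have right : HasDerivWithinAt V 1 (Set.Ici h) h := by
      refine dgh.hasDerivWithinAt.congr_of_eventuallyEq ?_ (by rw [Vh, gh])
      filter_upwards [self_mem_nhdsWithin, nhdsWithin_le_nhds (Iio_mem_nhds hhk)]
        with x hx1 hx2
      have hx1' : h ≤ x := Set.mem_Ici.mp hx1
      have hx2' : x < k := Set.mem_Iio.mp hx2
      rcases eq_or_lt_of_le hx1' with heq | hlt
      · rw [← heq, Vh, gh]
      · rw [Vval, if_neg (not_le.mpr hx2'), if_pos hlt]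
    have := left.union right
    rw [Set.Iic_union_Ici] at this
    exact hasDerivWithinAt_univ.mp this
  -- derivative at k
  have derivk : HasDerivAt V 1 k := by
    have left : HasDerivWithinAt V 1 (Set.Iic k) k := by
      refine dgk.hasDerivWithinAt.congr_of_eventuallyEq ?_ (by rw [Vk, gk])
      filter_upwards [self_mem_nhdsWithin, nhdsWithin_le_nhds (Ioi_mem_nhds hhk)]
        with x hx1 hx2
      have hx1' : x ≤ k := Set.mem_Iic.mp hx1
      have hx2' : h < x := Set.mem_Ioi.mp hx2
      rcases eq_or_lt_of_le hx1' with heq | hlt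
      · rw [heq, Vk, gk]
      · rw [Vval, if_neg (not_le.mpr hlt), if_pos hx2']
    have right : HasDerivWithinAt V 1 (Set.Ici k) k := by
      have base : HasDerivAt (fun x : ℝ => x - K) 1 k := by
        simpa using (hasDerivAt_id k).sub_const K
      refine base.hasDerivWithinAt.congr_of_eventuallyEq ?_ (by rw [Vk])
      filter_upwards [self_mem_nhdsWithin] with x hx1
      rw [Vval, if_pos (Set.mem_Ici.mp hx1)]
    have := left.union right
    rw [Set.Iic_union_Ici] at this
    exact hasDerivWithinAt_univ.mp this
  refine ⟨?_, derivh, derivk⟩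
  -- continuity
  intro x hx
  have hx0 : (0:ℝ) < x := hx
  rcases lt_trichotomy x K with hxK | hxK | hxK
  · -- x < K : V equals δ (x/K)^η near x
    apply ContinuousAt.continuousWithinAt
    have cb : ContinuousAt (fun y : ℝ => δ * (y / K) ^ η) x := by
      exact ((continuousAt_id.div_const K).rpow_const
        (Or.inl (by positivity))).const_mul δ
    refine cb.congr ?_
    filter_upwards [Iio_mem_nhds hxK, Ioi_mem_nhds hx0] with y hy1 hy2
    rw [Vval, if_neg (by push_neg; exact hy1.trans (hKh.trans hhk)),
      if_neg (by push_neg; exact (hy1.trans hKh).le), if_neg (not_le.mpr hy1)]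
  · -- x = K
    apply ContinuousAt.continuousWithinAt
    rw [continuousAt_iff_continuous_left_right]
    have hKhk : ¬ k ≤ K := not_le.mpr (hKh.trans hhk)
    have hKhh : ¬ h < K := not_lt.mpr hKh.le
    have VK : V x = δ := by
      rw [Vval, hxK, if_neg hKhk, if_neg hKhh, if_pos le_rfl, sub_self, zero_add]
    constructor
    · have cb : ContinuousAt (fun y : ℝ => δ * (y / K) ^ η) x :=
        ((continuousAt_id.div_const K).rpow_const
          (Or.inl (by rw [hxK]; simp [hK.ne']))).const_mul δ
      refine cb.continuousWithinAt.congr_of_eventuallyEq ?_ ?_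
      · filter_upwards [self_mem_nhdsWithin, nhdsWithin_le_nhds (Ioi_mem_nhds hx0)]
          with y hy1 hy2
        have hy1' : y ≤ K := hxK ▸ Set.mem_Iic.mp hy1
        rcases eq_or_lt_of_le hy1' with he | hl
        · rw [Vval, if_neg (by rw [he]; exact hKhk), if_neg (by rw [he]; exact hKhh),
            if_pos he.ge, he, div_self hK.ne', Real.one_rpow, sub_self, zero_add, mul_one]
        · rw [Vval, if_neg (not_le.mpr (hl.trans (hKh.trans hhk))),
            if_neg (not_lt.mpr (hl.trans hKh).le), if_neg (not_le.mpr hl)]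
      · rw [VK, hxK, div_self hK.ne', Real.one_rpow, mul_one]
    · have cb : ContinuousAt (fun y : ℝ => (y - K) + δ) x := by fun_prop
      refine cb.continuousWithinAt.congr_of_eventuallyEq ?_ ?_
      · filter_upwards [self_mem_nhdsWithin, nhdsWithin_le_nhds (Iio_mem_nhds (hxK ▸ hKh))]
          with y hy1 hy2
        have hy1' : K ≤ y := hxK ▸ Set.mem_Ici.mp hy1
        have hy2' : y < h := Set.mem_Iio.mp hy2
        rw [Vval, if_neg (not_le.mpr (hy2'.trans hhk)), if_neg (not_lt.mpr hy2'.le),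
          if_pos hy1']
      · rw [VK, hxK, sub_self, zero_add]
  · -- x > K
    rcases lt_trichotomy x h with hxh | hxh | hxh
    · apply ContinuousAt.continuousWithinAt
      have cb : ContinuousAt (fun y : ℝ => (y - K) + δ) x := by fun_prop
      refine cb.congr ?_
      filter_upwards [Iio_mem_nhds hxh, Ioi_mem_nhds hxK] with y hy1 hy2
      have hy1' : y < h := hy1
      have hy2' : K < y := hy2
      rw [Vval, if_neg (not_le.mpr (hy1'.trans hhk)), if_neg (not_lt.mpr hy1'.le),
        if_pos hy2'.le]
    · exact (hxh ▸ derivh.continuousAt).continuousWithinAt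
    · rcases lt_trichotomy x k with hxk | hxk | hxk
      · apply ContinuousAt.continuousWithinAt
        have cg : ContinuousAt g x := (dg x hx0).continuousAt
        refine cg.congr ?_
        filter_upwards [Iio_mem_nhds hxk, Ioi_mem_nhds hxh] with y hy1 hy2
        have hy1' : y < k := hy1
        have hy2' : h < y := hy2
        rw [Vval, if_neg (not_le.mpr hy1'), if_pos hy2']
      · exact (hxk ▸ derivk.continuousAt).continuousWithinAt
      · apply ContinuousAt.continuousWithinAt
        have cb : ContinuousAt (fun y : ℝ => y - K) x := by fun_prop
        refine cb.congr ?_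
        filter_upwards [Ioi_mem_nhds hxk] with y hy1
        have hy1' : k < y := hy1
        rw [Vval, if_pos hy1'.le]

end
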